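/- arXiv:1811.04852 — 6 statements merged into one kernel-verified Lean document; each statement's English description precedes it below -/
import Mathlib

section
/- Let X and Y be positive semidefinite matrices in C^{n×n} with max(rank(X), rank(Y)) = k. Then ||X - Y||_F ≤ (2k)^{1/4} · ||X² - Y²||_F^{1/2}, where ||·||_F denotes the Frobenius norm. -/
open Matrix Finset
open scoped ComplexOrder

noncomputable def frob {m n : ℕ} (M : Matrix (Fin m) (Fin n) ℂ) : ℝ :=
  Real.sqrt (∑ i, ∑ j, ‖M i j‖ ^ 2)

noncomputable def spec {m n : ℕ} (M : Matrix (Fin m) (Fin n) ℂ) : ℝ :=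
  ‖LinearMap.toContinuousLinearMap (Matrix.toEuclideanLin M)‖

def IsMoorePenrose {m n : ℕ} (M : Matrix (Fin m) (Fin n) ℂ) (G : Matrix (Fin n) (Fin m) ℂ) : Prop :=
  M * G * M = M ∧ G * M * G = G ∧ (M * G)ᴴ = M * G ∧ (G * M)ᴴ = G * M

noncomputable def enorm {n : ℕ} (x : Fin n → ℂ) : ℝ := Real.sqrt (∑ i, ‖x i‖ ^ 2)


-- basic frob lemmas
lemma frob_nonneg {m n : ℕ} (M : Matrix (Fin m) (Fin n) ℂ) : 0 ≤ frob M := Real.sqrt_nonneg _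

lemma frob_sq {m n : ℕ} (M : Matrix (Fin m) (Fin n) ℂ) :
    frob M ^ 2 = ∑ i, ∑ j, ‖M i j‖ ^ 2 := by
  rw [frob, Real.sq_sqrt]
  positivity

lemma frob_trace {n : ℕ} (M : Matrix (Fin n) (Fin n) ℂ) :
    ((Mᴴ * M).trace).re = ∑ i, ∑ j, ‖M i j‖ ^ 2 := by
  rw [Matrix.trace, Complex.re_sum]
  rw [Finset.sum_comm]
  refine Finset.sum_congr rfl fun j _ => ?_
  rw [Matrix.diag_apply, Matrix.mul_apply, Complex.re_sum]
  refine Finset.sum_congr rfl fun i _ => ?_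
  rw [Matrix.conjTranspose_apply]
  have : (starRingEnd ℂ) (M i j) * M i j = Complex.normSq (M i j) := by
    rw [mul_comm, Complex.mul_conj]
  rw [show (star (M i j)) = (starRingEnd ℂ) (M i j) from rfl, this, Complex.ofReal_re, ← Complex.sq_norm]

lemma frob_conj {n : ℕ} (U M : Matrix (Fin n) (Fin n) ℂ)
    (hU2 : U * star U = 1) :
    frob (star U * M * U) = frob M := by
  have key : ((star U * M * U)ᴴ * (star U * M * U)).trace = (Mᴴ * M).trace := by
    have h1 : (star U * M * U)ᴴ = Uᴴ * Mᴴ * U := by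
      simp [Matrix.conjTranspose_mul, Matrix.star_eq_conjTranspose, mul_assoc]
    rw [h1, Matrix.star_eq_conjTranspose]
    have h2 : Uᴴ * Mᴴ * U * (Uᴴ * M * U) = Uᴴ * (Mᴴ * (U * Uᴴ) * M) * U := by
      simp only [mul_assoc]
    rw [h2, show U * Uᴴ = 1 from hU2, mul_one]
    rw [Matrix.trace_mul_comm, ← mul_assoc, ← mul_assoc, show U * Uᴴ = 1 from hU2, one_mul]
  unfold frob
  rw [← frob_trace, ← frob_trace, key]

lemma frob_diagonal_sq {n : ℕ} (c : Fin n → ℂ) :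
    frob (Matrix.diagonal c) ^ 2 = ∑ i, ‖c i‖ ^ 2 := by
  rw [frob_sq]
  refine Finset.sum_congr rfl fun i _ => ?_
  rw [Finset.sum_eq_single i]
  · simp
  · intro j _ hj
    simp [Matrix.diagonal_apply_ne' _ hj]
  · simp

lemma psd_diag {n : ℕ} {M : Matrix (Fin n) (Fin n) ℂ} (hM : M.PosSemidef) (i : Fin n) :
    M i i = ((M i i).re : ℂ) ∧ 0 ≤ (M i i).re := by
  have h := hM.dotProduct_mulVec_nonneg (Pi.single i 1)
  have hval : dotProduct (star (Pi.single i 1)) (M *ᵥ Pi.single i 1) = M i i := by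
    simp [dotProduct, Matrix.mulVec, Pi.single_apply, apply_ite (star : ℂ → ℂ), mul_ite, ite_mul,
      Finset.sum_ite_eq, Finset.sum_ite_eq']
  rw [hval] at h
  rw [Complex.nonneg_iff] at h
  exact ⟨by rw [Complex.ext_iff]; simp [← h.2], h.1⟩

lemma rank_neg' {n : ℕ} (A : Matrix (Fin n) (Fin n) ℂ) : (-A).rank = A.rank := by
  unfold Matrix.rank
  have h1 : (-A).mulVecLin = -(A.mulVecLin) := by
    ext x
    simp [Matrix.neg_mulVec]
  have h : LinearMap.range (-A).mulVecLin = LinearMap.range A.mulVecLin := by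
    rw [h1, LinearMap.range_neg]
  rw [h]

lemma rank_add_le' {n : ℕ} (A B : Matrix (Fin n) (Fin n) ℂ) :
    (A + B).rank ≤ A.rank + B.rank := by
  have h1 : (A + B).mulVecLin = A.mulVecLin + B.mulVecLin := Matrix.mulVecLin_add A B
  have h2 : LinearMap.range (A + B).mulVecLin ≤
      LinearMap.range A.mulVecLin ⊔ LinearMap.range B.mulVecLin := by
    rw [h1]
    rintro y ⟨x, rfl⟩
    exact Submodule.add_mem_sup (LinearMap.mem_range_self _ x) (LinearMap.mem_range_self _ x)
  calc (A + B).rank ≤ Module.finrank ℂ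
        (LinearMap.range A.mulVecLin ⊔ LinearMap.range B.mulVecLin : Submodule ℂ _) :=
        Submodule.finrank_mono h2
    _ ≤ A.rank + B.rank := Submodule.finrank_add_le_finrank_add_finrank _ _


theorem stmt0 {n k : ℕ} (X Y : Matrix (Fin n) (Fin n) ℂ)
    (hX : X.PosSemidef) (hY : Y.PosSemidef)
    (hk : max X.rank Y.rank = k) :
    frob (X - Y) ≤ ((2 * k : ℝ) ^ ((1 : ℝ) / 4)) * Real.sqrt (frob (X * X - Y * Y)) := by
  classical
  have hD : (X - Y).IsHermitian := hX.1.sub hY.1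
  set U : Matrix (Fin n) (Fin n) ℂ := (hD.eigenvectorUnitary : Matrix (Fin n) (Fin n) ℂ) with hUdef
  set d : Fin n → ℝ := hD.eigenvalues with hddef
  set c : Fin n → ℂ := RCLike.ofReal ∘ d with hcdef
  have hU1 : star U * U = 1 := (Unitary.mem_iff.mp hD.eigenvectorUnitary.2).1
  have hU2 : U * star U = 1 := (Unitary.mem_iff.mp hD.eigenvectorUnitary.2).2
  have hdiag : star U * (X - Y) * U = Matrix.diagonal c := by
    have h := hD.conjStarAlgAut_star_eigenvectorUnitary
    rw [Unitary.conjStarAlgAut_apply] at h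
    simp at h
    exact h
  set A : Matrix (Fin n) (Fin n) ℂ := star U * X * U with hAdef
  set B : Matrix (Fin n) (Fin n) ℂ := star U * Y * U with hBdef
  have hApsd : A.PosSemidef := by
    rw [hAdef, Matrix.star_eq_conjTranspose]
    exact hX.conjTranspose_mul_mul_same U
  have hBpsd : B.PosSemidef := by
    rw [hBdef, Matrix.star_eq_conjTranspose]
    exact hY.conjTranspose_mul_mul_same U
  have hAB : A - B = Matrix.diagonal c := by
    rw [← hdiag, hAdef, hBdef, Matrix.mul_sub, Matrix.sub_mul]
  set M : Matrix (Fin n) (Fin n) ℂ := star U * (X * X - Y * Y) * U with hMdef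
  have hmul : ∀ P Q : Matrix (Fin n) (Fin n) ℂ,
      (star U * P * U) * (star U * Q * U) = star U * (P * Q) * U := by
    intro P Q
    calc (star U * P * U) * (star U * Q * U)
        = star U * P * ((U * star U) * (Q * U)) := by simp only [mul_assoc]
      _ = star U * P * (1 * (Q * U)) := by rw [hU2]
      _ = star U * (P * Q) * U := by simp only [one_mul, mul_assoc]
  have hMAB : M = A * A - B * B := by
    rw [hMdef, hAdef, hBdef, hmul, hmul, Matrix.mul_sub, Matrix.sub_mul]
  have hid : Matrix.diagonal c * (A + B) + (A + B) * Matrix.diagonal c = M + M := by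
    rw [← hAB, hMAB]
    noncomm_ring
  -- key pointwise inequality
  have key : ∀ i, d i ^ 2 ≤ ‖M i i‖ := by
    intro i
    obtain ⟨hAre, ha⟩ := psd_diag hApsd i
    obtain ⟨hBre, hb⟩ := psd_diag hBpsd i
    set a : ℝ := (A i i).re
    set b : ℝ := (B i i).re
    have hci : c i = A i i - B i i := by
      have := congrFun (congrFun hAB i) i
      rw [Matrix.sub_apply, Matrix.diagonal_apply_eq] at this
      exact this.symm
    have hdi : d i = a - b := by
      have : ((d i : ℝ) : ℂ) = ((a - b : ℝ) : ℂ) := by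
        have h1 : c i = ((d i : ℝ) : ℂ) := rfl
        rw [← h1, hci, hAre, hBre]
        push_cast
        ring
      exact_mod_cast this
    have hMii : M i i + M i i = c i * (A + B) i i + c i * (A + B) i i := by
      have := congrFun (congrFun hid i) i
      rw [Matrix.add_apply (M) (M)] at this
      rw [← this]
      simp [Matrix.add_apply, Matrix.diagonal_mul, Matrix.mul_diagonal, mul_comm]
    have hMii' : M i i = c i * (A + B) i i := by
      have h2 : (2 : ℂ) * M i i = (2 : ℂ) * (c i * (A + B) i i) := by
        rw [two_mul, two_mul]; exact hMii
      exact mul_left_cancel₀ two_ne_zero h2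
    have hSii : (A + B) i i = ((a + b : ℝ) : ℂ) := by
      rw [Matrix.add_apply, hAre, hBre]; push_cast; ring
    have hnorm : ‖M i i‖ = |d i| * (a + b) := by
      rw [hMii', norm_mul, hSii]
      have h1 : ‖c i‖ = |d i| := by
        rw [show c i = ((d i : ℝ) : ℂ) from rfl, Complex.norm_real, Real.norm_eq_abs]
      rw [h1, Complex.norm_real, Real.norm_eq_abs,
        abs_of_nonneg (show (0:ℝ) ≤ a + b by linarith)]
    rw [hnorm, hdi]
    have habs : |a - b| ≤ a + b := by
      rw [abs_le]; constructor <;> linarith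
    calc (a - b) ^ 2 = |a - b| * |a - b| := by rw [abs_mul_abs_self]; ring
      _ ≤ |a - b| * (a + b) := by
          exact mul_le_mul_of_nonneg_left habs (abs_nonneg _)
  -- frobenius computations
  have h1 : frob (X - Y) ^ 2 = ∑ i, d i ^ 2 := by
    rw [← frob_conj U (X - Y) hU2, hdiag, frob_diagonal_sq]
    refine Finset.sum_congr rfl fun i _ => ?_
    rw [show c i = ((d i : ℝ) : ℂ) from rfl, Complex.norm_real, Real.norm_eq_abs, sq_abs]
  set F : ℝ := frob (X * X - Y * Y) with hFdef
  have hF0 : 0 ≤ F := frob_nonneg _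
  have hFsq : ∑ i, ∑ j, ‖M i j‖ ^ 2 = F ^ 2 := by
    rw [← frob_sq, hMdef, frob_conj _ _ hU2]
  -- rank bound
  set s : Finset (Fin n) := Finset.univ.filter (fun i => d i ≠ 0) with hsdef
  have hcard : (s.card : ℝ) ≤ 2 * k := by
    have hrk : (X - Y).rank = s.card := by
      rw [hD.rank_eq_card_non_zero_eigs, Fintype.card_subtype]
    have hXk : X.rank ≤ k := hk ▸ le_max_left _ _
    have hYk : Y.rank ≤ k := hk ▸ le_max_right _ _
    have hsub : (X - Y).rank ≤ X.rank + Y.rank := by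
      calc (X - Y).rank = (X + (-Y)).rank := by rw [sub_eq_add_neg]
        _ ≤ X.rank + (-Y).rank := rank_add_le' X (-Y)
        _ = X.rank + Y.rank := by rw [rank_neg']
    have : s.card ≤ 2 * k := by omega
    exact_mod_cast this
  -- main chain
  have sum1 : ∑ i, d i ^ 2 = ∑ i ∈ s, d i ^ 2 := by
    rw [hsdef]
    rw [Finset.sum_filter_of_ne]
    intro i _ h
    intro hd
    exact h (by rw [hd]; ring)
  have sum2 : ∑ i ∈ s, d i ^ 2 ≤ ∑ i ∈ s, ‖M i i‖ :=
    Finset.sum_le_sum fun i _ => key i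
  have sum3 : (∑ i ∈ s, ‖M i i‖) ^ 2 ≤ (s.card : ℝ) * ∑ i ∈ s, ‖M i i‖ ^ 2 :=
    sq_sum_le_card_mul_sum_sq
  have sum4 : ∑ i ∈ s, ‖M i i‖ ^ 2 ≤ F ^ 2 := by
    rw [← hFsq]
    calc ∑ i ∈ s, ‖M i i‖ ^ 2 ≤ ∑ i ∈ s, ∑ j, ‖M i j‖ ^ 2 :=
          Finset.sum_le_sum fun i _ =>
            Finset.single_le_sum (f := fun j => ‖M i j‖ ^ 2) (fun j _ => sq_nonneg _)
              (Finset.mem_univ i)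
      _ ≤ ∑ i, ∑ j, ‖M i j‖ ^ 2 :=
          Finset.sum_le_sum_of_subset_of_nonneg (Finset.filter_subset _ _)
            (fun i _ _ => Finset.sum_nonneg fun j _ => sq_nonneg _)
  have final1 : (frob (X - Y) ^ 2) ^ 2 ≤ (2 * k) * F ^ 2 := by
    calc (frob (X - Y) ^ 2) ^ 2 = (∑ i ∈ s, d i ^ 2) ^ 2 := by rw [h1, sum1]
      _ ≤ (∑ i ∈ s, ‖M i i‖) ^ 2 := by
          apply pow_le_pow_left₀ (Finset.sum_nonneg fun i _ => sq_nonneg _) sum2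
      _ ≤ (s.card : ℝ) * ∑ i ∈ s, ‖M i i‖ ^ 2 := sum3
      _ ≤ (2 * k) * F ^ 2 := by
          apply mul_le_mul hcard sum4 (Finset.sum_nonneg fun i _ => sq_nonneg _)
          positivity
  have final2 : frob (X - Y) ^ 2 ≤ Real.sqrt (2 * k) * F := by
    have e1 : frob (X - Y) ^ 2 = Real.sqrt ((frob (X - Y) ^ 2) ^ 2) :=
      (Real.sqrt_sq (sq_nonneg _)).symm
    rw [e1]
    calc Real.sqrt ((frob (X - Y) ^ 2) ^ 2) ≤ Real.sqrt ((2 * k) * F ^ 2) :=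
          Real.sqrt_le_sqrt final1
      _ = Real.sqrt (2 * k) * F := by
          rw [Real.sqrt_mul (by positivity), Real.sqrt_sq hF0]
  have final3 : frob (X - Y) ≤ Real.sqrt (Real.sqrt (2 * k) * F) := by
    rw [show frob (X - Y) = Real.sqrt (frob (X - Y) ^ 2) from
      (Real.sqrt_sq (frob_nonneg _)).symm]
    exact Real.sqrt_le_sqrt final2
  calc frob (X - Y) ≤ Real.sqrt (Real.sqrt (2 * k) * F) := final3
    _ = Real.sqrt (Real.sqrt (2 * k)) * Real.sqrt F := Real.sqrt_mul (Real.sqrt_nonneg _) _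
    _ = ((2 * k : ℝ) ^ ((1 : ℝ) / 4)) * Real.sqrt F := by
        congr 1
        rw [Real.sqrt_eq_rpow, Real.sqrt_eq_rpow, ← Real.rpow_mul (by positivity)]
        norm_num
end

section
/- Let X and Y be positive semidefinite matrices in C^{n×n}, and let σ_min denote the minimum of the smallest nonzero singular values of X and Y. Then ||X⁻¹ - Y⁻¹||_F ≤ 3·||X - Y||_F / σ_min², where X⁻¹ and Y⁻¹ denote the Moore–Penrose pseudo-inverses. -/
open Matrix Finset
open scoped ComplexOrder

/-! ### Auxiliary lemmas -/

theorem mp_unique {m n : ℕ} {M : Matrix (Fin m) (Fin n) ℂ} {G G' : Matrix (Fin n) (Fin m) ℂ}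
    (hG : IsMoorePenrose M G) (hG' : IsMoorePenrose M G') : G = G' := by
  obtain ⟨h1, h2, h3, h4⟩ := hG
  obtain ⟨k1, k2, k3, k4⟩ := hG'
  have hMG : M * G = M * G' := by
    calc M * G = (M * G)ᴴ := h3.symm
    _ = Gᴴ * Mᴴ := by rw [conjTranspose_mul]
    _ = Gᴴ * (M * G' * M)ᴴ := by rw [k1]
    _ = Gᴴ * (Mᴴ * (M * G')ᴴ) := by rw [conjTranspose_mul]
    _ = Gᴴ * (Mᴴ * (M * G')) := by rw [k3]
    _ = (Gᴴ * Mᴴ) * (M * G') := by rw [Matrix.mul_assoc]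
    _ = (M * G)ᴴ * (M * G') := by rw [conjTranspose_mul]
    _ = (M * G) * (M * G') := by rw [h3]
    _ = (M * G * M) * G' := by simp only [Matrix.mul_assoc]
    _ = M * G' := by rw [h1]
  have hGM : G * M = G' * M := by
    calc G * M = (G * M)ᴴ := h4.symm
    _ = Mᴴ * Gᴴ := by rw [conjTranspose_mul]
    _ = (M * (G' * M))ᴴ * Gᴴ := by rw [← Matrix.mul_assoc, k1]
    _ = ((G' * M)ᴴ * Mᴴ) * Gᴴ := by rw [conjTranspose_mul]
    _ = ((G' * M) * Mᴴ) * Gᴴ := by rw [k4]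
    _ = (G' * M) * (Mᴴ * Gᴴ) := by rw [Matrix.mul_assoc]
    _ = (G' * M) * (G * M)ᴴ := by rw [conjTranspose_mul]
    _ = (G' * M) * (G * M) := by rw [h4]
    _ = G' * (M * G * M) := by simp only [Matrix.mul_assoc]
    _ = G' * M := by rw [h1]
  calc G = G * M * G := h2.symm
  _ = G' * M * G := by rw [hGM]
  _ = G' * (M * G) := by rw [Matrix.mul_assoc]
  _ = G' * (M * G') := by rw [hMG]
  _ = G' * M * G' := by rw [Matrix.mul_assoc]
  _ = G' := k2

theorem frob_eq_trace {m n : ℕ} (M : Matrix (Fin m) (Fin n) ℂ) :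
    frob M = Real.sqrt (Matrix.trace (Mᴴ * M)).re := by
  unfold frob
  congr 1
  have : Matrix.trace (Mᴴ * M) = ((∑ i, ∑ j, ‖M i j‖ ^ 2 : ℝ) : ℂ) := by
    rw [Matrix.trace]
    simp only [Matrix.diag_apply, Matrix.mul_apply, Matrix.conjTranspose_apply]
    rw [Finset.sum_comm]
    push_cast
    refine Finset.sum_congr rfl fun i _ => Finset.sum_congr rfl fun j _ => ?_
    simp only [RCLike.star_def]
    rw [← Complex.normSq_eq_conj_mul_self]
    norm_cast
    simp [Complex.normSq_eq_norm_sq]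
  rw [this, Complex.ofReal_re]

theorem frob_unit_left {n m : ℕ} (U : Matrix (Fin n) (Fin n) ℂ) (M : Matrix (Fin n) (Fin m) ℂ)
    (hU : Uᴴ * U = 1) : frob (U * M) = frob M := by
  rw [frob_eq_trace, frob_eq_trace]
  have : (U * M)ᴴ * (U * M) = Mᴴ * M := by
    rw [conjTranspose_mul, Matrix.mul_assoc, ← Matrix.mul_assoc Uᴴ, hU, Matrix.one_mul]
  rw [this]

theorem frob_unit_right {n m : ℕ} (U : Matrix (Fin n) (Fin n) ℂ) (M : Matrix (Fin m) (Fin n) ℂ)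
    (hU : U * Uᴴ = 1) : frob (M * U) = frob M := by
  rw [frob_eq_trace, frob_eq_trace]
  have : Matrix.trace ((M * U)ᴴ * (M * U)) = Matrix.trace (Mᴴ * M) := by
    rw [conjTranspose_mul, Matrix.mul_assoc, Matrix.trace_mul_comm, Matrix.mul_assoc,
      Matrix.mul_assoc, hU, Matrix.mul_one]
  rw [this]

theorem scal {σ a b : ℝ} (hσ : 0 < σ) (ha : a = 0 ∨ σ ≤ a) (hb : b = 0 ∨ σ ≤ b) :
    |a⁻¹ - b⁻¹| ≤ 3 / σ ^ 2 * |a - b| := by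
  have hσ2 : 0 < σ ^ 2 := by positivity
  rcases ha with rfl | ha <;> rcases hb with rfl | hb
  · simp
  · have hbpos : 0 < b := lt_of_lt_of_le hσ hb
    rw [_root_.inv_zero, zero_sub, abs_neg, abs_of_pos (inv_pos.2 hbpos), zero_sub, abs_neg,
      abs_of_pos hbpos, div_mul_eq_mul_div, le_div_iff₀ hσ2]
    have h1 : σ ^ 2 ≤ b ^ 2 := by nlinarith
    calc b⁻¹ * σ ^ 2 ≤ b⁻¹ * b ^ 2 := by
          exact mul_le_mul_of_nonneg_left h1 (by positivity)
    _ = b := by field_simp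
    _ ≤ 3 * b := by nlinarith
  · have hapos : 0 < a := lt_of_lt_of_le hσ ha
    rw [_root_.inv_zero, sub_zero, abs_of_pos (inv_pos.2 hapos), sub_zero,
      abs_of_pos hapos, div_mul_eq_mul_div, le_div_iff₀ hσ2]
    have h1 : σ ^ 2 ≤ a ^ 2 := by nlinarith
    calc a⁻¹ * σ ^ 2 ≤ a⁻¹ * a ^ 2 := by
          exact mul_le_mul_of_nonneg_left h1 (by positivity)
    _ = a := by field_simp
    _ ≤ 3 * a := by nlinarith
  · have hapos : 0 < a := lt_of_lt_of_le hσ ha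
    have hbpos : 0 < b := lt_of_lt_of_le hσ hb
    rw [inv_sub_inv hapos.ne' hbpos.ne', abs_div, abs_mul, abs_of_pos hapos, abs_of_pos hbpos,
      div_le_iff₀ (by positivity), abs_sub_comm b a]
    have h1 : σ ^ 2 ≤ a * b := by nlinarith
    have h2 : (3:ℝ) ≤ 3 / σ ^ 2 * (a * b) := by
      rw [div_mul_eq_mul_div, le_div_iff₀ hσ2]; nlinarith
    nlinarith [mul_le_mul_of_nonneg_right h2 (abs_nonneg (a - b)), abs_nonneg (a - b)]

theorem key {n : ℕ} (W : Matrix (Fin n) (Fin n) ℂ) (d e d' e' : Fin n → ℝ) (c : ℝ) (hc : 0 ≤ c)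
    (h : ∀ i j, |d' i - e' j| ≤ c * |d i - e j|) :
    frob (diagonal (fun i => (d' i : ℂ)) * W - W * diagonal (fun j => (e' j : ℂ)))
      ≤ c * frob (diagonal (fun i => (d i : ℂ)) * W - W * diagonal (fun j => (e j : ℂ))) := by
  unfold frob
  rw [← Real.sqrt_sq hc, ← Real.sqrt_mul (sq_nonneg c)]
  apply Real.sqrt_le_sqrt
  rw [Finset.mul_sum]
  refine Finset.sum_le_sum fun i _ => ?_
  rw [Finset.mul_sum]
  refine Finset.sum_le_sum fun j _ => ?_
  have hent : ∀ (f g : Fin n → ℝ),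
      (diagonal (fun i => (f i : ℂ)) * W - W * diagonal (fun j => (g j : ℂ))) i j
        = ((f i - g j : ℝ) : ℂ) * W i j := by
    intro f g
    simp only [Matrix.sub_apply, Matrix.diagonal_mul, Matrix.mul_diagonal, Complex.ofReal_sub]
    ring
  rw [hent, hent, norm_mul, norm_mul, Complex.norm_real, Complex.norm_real,
    Real.norm_eq_abs, Real.norm_eq_abs]
  have key2 : |d' i - e' j| ^ 2 ≤ c ^ 2 * |d i - e j| ^ 2 := by
    have := h i j
    nlinarith [abs_nonneg (d' i - e' j), abs_nonneg (d i - e j)]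
  calc (|d' i - e' j| * ‖W i j‖) ^ 2 = |d' i - e' j| ^ 2 * ‖W i j‖ ^ 2 := by ring
  _ ≤ (c ^ 2 * |d i - e j| ^ 2) * ‖W i j‖ ^ 2 :=
      mul_le_mul_of_nonneg_right key2 (sq_nonneg _)
  _ = c ^ 2 * (|d i - e j| * ‖W i j‖) ^ 2 := by ring

theorem psd_pinv {n : ℕ} {X : Matrix (Fin n) (Fin n) ℂ} (hX : X.PosSemidef) :
    IsMoorePenrose X ((hX.1.eigenvectorUnitary : Matrix (Fin n) (Fin n) ℂ) *
      diagonal (fun i => ((hX.1.eigenvalues i)⁻¹ : ℂ)) *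
      star (hX.1.eigenvectorUnitary : Matrix (Fin n) (Fin n) ℂ)) := by
  set U : Matrix (Fin n) (Fin n) ℂ := (hX.1.eigenvectorUnitary : Matrix (Fin n) (Fin n) ℂ)
    with hUdef
  have hU1 : star U * U = 1 := hX.1.eigenvectorUnitary.2.1
  have hU1' : ∀ C : Matrix (Fin n) (Fin n) ℂ, star U * (U * C) = C := fun C => by
    rw [← Matrix.mul_assoc, hU1, Matrix.one_mul]
  have sandwich : ∀ a b : Fin n → ℂ,
      (U * diagonal a * star U) * (U * diagonal b * star U)
        = U * diagonal (fun i => a i * b i) * star U := by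
    intro a b
    simp only [Matrix.mul_assoc, hU1']
    rw [← Matrix.mul_assoc (diagonal a), diagonal_mul_diagonal]
  have herm : ∀ c : Fin n → ℂ, (U * diagonal c * star U)ᴴ
      = U * diagonal (fun i => star (c i)) * star U := by
    intro c
    rw [conjTranspose_mul, conjTranspose_mul, diagonal_conjTranspose,
      Matrix.star_eq_conjTranspose, conjTranspose_conjTranspose]
    simp only [Matrix.mul_assoc]
    rfl
  have hXeq : X = U * diagonal (fun i => ((hX.1.eigenvalues i : ℝ) : ℂ)) * star U := by
    have := hX.1.spectral_theorem
    rw [Unitary.conjStarAlgAut_apply] at this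
    rw [hUdef]
    exact this
  set lam := hX.1.eigenvalues with hlam
  have hfun1 : (fun i => ((lam i : ℂ)) * ((lam i : ℂ))⁻¹ * (lam i : ℂ)) = (fun i => ((lam i : ℂ))) := by
    funext i
    rcases eq_or_ne (lam i) 0 with h | h
    · simp [h]
    · have : ((lam i : ℂ)) ≠ 0 := by exact_mod_cast h
      field_simp
  have hfun2 : (fun i => ((lam i : ℂ))⁻¹ * (lam i : ℂ) * ((lam i : ℂ))⁻¹) = (fun i => ((lam i : ℂ))⁻¹) := by
    funext i
    rcases eq_or_ne (lam i) 0 with h | h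
    · simp [h]
    · have : ((lam i : ℂ)) ≠ 0 := by exact_mod_cast h
      field_simp
  have hfun3 : (fun i => star ((lam i : ℂ) * ((lam i : ℂ))⁻¹)) = (fun i => (lam i : ℂ) * ((lam i : ℂ))⁻¹) := by
    funext i
    simp only [RCLike.star_def, _root_.map_mul, map_inv₀, Complex.conj_ofReal]
  have hfun4 : (fun i => star (((lam i : ℂ))⁻¹ * (lam i : ℂ))) = (fun i => ((lam i : ℂ))⁻¹ * (lam i : ℂ)) := by
    funext i
    simp only [RCLike.star_def, _root_.map_mul, map_inv₀, Complex.conj_ofReal]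
  refine ⟨?_, ?_, ?_, ?_⟩
  · rw [hXeq, sandwich, sandwich, hfun1]
  · rw [hXeq, sandwich, sandwich, hfun2]
  · rw [hXeq, sandwich, herm, hfun3]
  · rw [hXeq, sandwich, herm, hfun4]

theorem stmt1 {n : ℕ} (X Y Xinv Yinv : Matrix (Fin n) (Fin n) ℂ)
    (hX : X.PosSemidef) (hY : Y.PosSemidef)
    (hXinv : IsMoorePenrose X Xinv) (hYinv : IsMoorePenrose Y Yinv)
    (σ : ℝ) (hσ : 0 < σ)
    (hσX : ∀ i, hX.1.eigenvalues i ≠ 0 → σ ≤ hX.1.eigenvalues i)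
    (hσY : ∀ i, hY.1.eigenvalues i ≠ 0 → σ ≤ hY.1.eigenvalues i) :
    frob (Xinv - Yinv) ≤ 3 * frob (X - Y) / σ ^ 2 := by
  classical
  set d := hX.1.eigenvalues with hd
  set e := hY.1.eigenvalues with he
  set Ux : Matrix (Fin n) (Fin n) ℂ := (hX.1.eigenvectorUnitary : Matrix (Fin n) (Fin n) ℂ)
    with hUxdef
  set Uy : Matrix (Fin n) (Fin n) ℂ := (hY.1.eigenvectorUnitary : Matrix (Fin n) (Fin n) ℂ)
    with hUydef
  have hUx1 : star Ux * Ux = 1 := hX.1.eigenvectorUnitary.2.1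
  have hUx2 : Ux * star Ux = 1 := hX.1.eigenvectorUnitary.2.2
  have hUy1 : star Uy * Uy = 1 := hY.1.eigenvectorUnitary.2.1
  have hUy2 : Uy * star Uy = 1 := hY.1.eigenvectorUnitary.2.2
  have hcoe : ∀ f : Fin n → ℝ, (fun i => (((f i)⁻¹ : ℝ) : ℂ)) = fun i => ((f i : ℂ))⁻¹ :=
    fun f => funext fun i => Complex.ofReal_inv _
  have hXinv_eq : Xinv = Ux * diagonal (fun i => (((d i)⁻¹ : ℝ) : ℂ)) * star Ux := by
    rw [hcoe]
    exact mp_unique hXinv (psd_pinv hX)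
  have hYinv_eq : Yinv = Uy * diagonal (fun i => (((e i)⁻¹ : ℝ) : ℂ)) * star Uy := by
    rw [hcoe]
    exact mp_unique hYinv (psd_pinv hY)
  have hXsp : X = Ux * diagonal (fun i => ((d i : ℝ) : ℂ)) * star Ux := by
    have := hX.1.spectral_theorem
    rw [Unitary.conjStarAlgAut_apply] at this
    exact this
  have hYsp : Y = Uy * diagonal (fun i => ((e i : ℝ) : ℂ)) * star Uy := by
    have := hY.1.spectral_theorem
    rw [Unitary.conjStarAlgAut_apply] at this
    exact this
  have hsx : ∀ D : Matrix (Fin n) (Fin n) ℂ,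
      star Ux * (Ux * D * star Ux) * Uy = D * (star Ux * Uy) := by
    intro D
    simp only [← Matrix.mul_assoc]
    rw [hUx1, Matrix.one_mul, Matrix.mul_assoc]
  have hsy : ∀ D : Matrix (Fin n) (Fin n) ℂ,
      star Ux * (Uy * D * star Uy) * Uy = (star Ux * Uy) * D := by
    intro D
    simp only [← Matrix.mul_assoc]
    rw [Matrix.mul_assoc (star Ux * Uy * D), hUy1, Matrix.mul_one]
  have hL : (star Ux)ᴴ * (star Ux) = 1 := by
    rw [← Matrix.star_eq_conjTranspose, star_star]
    exact hUx2
  have hR : Uy * Uyᴴ = 1 := by rw [← Matrix.star_eq_conjTranspose]; exact hUy2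
  have hfr : ∀ M : Matrix (Fin n) (Fin n) ℂ, frob (star Ux * M * Uy) = frob M := by
    intro M
    rw [frob_unit_right _ _ hR, frob_unit_left _ _ hL]
  have e1 : frob (Xinv - Yinv) = frob
      (diagonal (fun i => (((d i)⁻¹ : ℝ) : ℂ)) * (star Ux * Uy)
        - (star Ux * Uy) * diagonal (fun j => (((e j)⁻¹ : ℝ) : ℂ))) := by
    rw [← hfr (Xinv - Yinv)]
    congr 1
    rw [Matrix.mul_sub, Matrix.sub_mul, hXinv_eq, hYinv_eq, hsx, hsy]
  have e2 : frob (X - Y) = frob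
      (diagonal (fun i => ((d i : ℝ) : ℂ)) * (star Ux * Uy)
        - (star Ux * Uy) * diagonal (fun j => ((e j : ℝ) : ℂ))) := by
    rw [← hfr (X - Y)]
    congr 1
    rw [Matrix.mul_sub, Matrix.sub_mul, hXsp, hYsp, hsx, hsy]
  have happ := key (star Ux * Uy) d e (fun i => (d i)⁻¹) (fun j => (e j)⁻¹) (3 / σ ^ 2)
    (by positivity) (fun i j => by
      refine scal hσ ?_ ?_
      · rcases eq_or_ne (d i) 0 with h | h
        · exact Or.inl h
        · exact Or.inr (hσX i h)
      · rcases eq_or_ne (e j) 0 with h | h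
        · exact Or.inl h
        · exact Or.inr (hσY j h))
  rw [e1, e2]
  calc frob _ ≤ 3 / σ ^ 2 * frob _ := happ
  _ = 3 * frob
      (diagonal (fun i => ((d i : ℝ) : ℂ)) * (star Ux * Uy)
        - (star Ux * Uy) * diagonal (fun j => ((e j : ℝ) : ℂ))) / σ ^ 2 := by ring
end

section
/- Let x, y ∈ C^n be nonzero vectors with ||x - y|| ≤ ε. Then the total variation distance between the distributions D_x and D_y satisfies ||D_x, D_y||_TV ≤ 2ε/||x||, where D_x(i) = |x(i)|²/||x||². -/
open Matrix Finset
open scoped ComplexOrder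

noncomputable def enorm' {n : ℕ} (x : Fin n → ℂ) : ℝ := Real.sqrt (∑ i, ‖x i‖ ^ 2)

set_option maxHeartbeats 1000000

lemma enorm'_eq {n : ℕ} (x : Fin n → ℂ) :
    enorm' x = ‖((WithLp.equiv 2 (Fin n → ℂ)).symm x : EuclideanSpace ℂ (Fin n))‖ := by
  rw [EuclideanSpace.norm_eq]; rfl

lemma enorm'_sq {n : ℕ} (x : Fin n → ℂ) : (enorm' x) ^ 2 = ∑ i, ‖x i‖ ^ 2 := by
  rw [enorm', Real.sq_sqrt (Finset.sum_nonneg fun i _ => sq_nonneg _)]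

lemma enorm'_pos {n : ℕ} {x : Fin n → ℂ} (hx : x ≠ 0) : 0 < enorm' x := by
  obtain ⟨i, hi⟩ : ∃ i, x i ≠ 0 := by
    by_contra h; push_neg at h; exact hx (funext h)
  apply Real.sqrt_pos.mpr
  exact Finset.sum_pos' (fun j _ => by positivity)
    ⟨i, Finset.mem_univ i, pow_pos (norm_pos_iff.mpr hi) 2⟩

theorem stmt3 {n : ℕ} (x y : Fin n → ℂ) (hx : x ≠ 0) (hy : y ≠ 0)
    (ε : ℝ) (hxy : enorm' (x - y) ≤ ε) :
    (1 / 2) * ∑ i, |‖x i‖ ^ 2 / (enorm' x) ^ 2 - ‖y i‖ ^ 2 / (enorm' y) ^ 2|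
      ≤ 2 * ε / enorm' x := by
  classical
  set X := enorm' x with hXdef
  set Y := enorm' y with hYdef
  have hXpos : 0 < X := enorm'_pos hx
  have hYpos : 0 < Y := enorm'_pos hy
  set x' : EuclideanSpace ℂ (Fin n) := (WithLp.equiv 2 (Fin n → ℂ)).symm x with hx'def
  set y' : EuclideanSpace ℂ (Fin n) := (WithLp.equiv 2 (Fin n → ℂ)).symm y with hy'def
  have hnx : ‖x'‖ = X := (enorm'_eq x).symm
  have hny : ‖y'‖ = Y := (enorm'_eq y).symm
  set u : EuclideanSpace ℂ (Fin n) := (X⁻¹ : ℝ) • x' with hudef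
  set v : EuclideanSpace ℂ (Fin n) := (Y⁻¹ : ℝ) • y' with hvdef
  have hxy' : ‖x' - y'‖ ≤ ε := by
    have : x' - y' = (WithLp.equiv 2 (Fin n → ℂ)).symm (x - y) := rfl
    rw [this, ← enorm'_eq]; exact hxy
  have hε : 0 ≤ ε := le_trans (Real.sqrt_nonneg _) hxy
  -- bound on ‖u - v‖
  have huv : ‖u - v‖ ≤ 2 * ε / X := by
    have hdecomp : u - v = (X⁻¹ : ℝ) • (x' - y') + ((X⁻¹ : ℝ) - (Y⁻¹ : ℝ)) • y' := by
      rw [hudef, hvdef]; module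
    have h1 : ‖(X⁻¹ : ℝ) • (x' - y')‖ ≤ ε / X := by
      rw [norm_smul, Real.norm_eq_abs, abs_of_pos (inv_pos.mpr hXpos), inv_mul_le_iff₀ hXpos,
        mul_comm, div_mul_cancel₀ _ hXpos.ne']
      exact hxy'
    have h2 : ‖((X⁻¹ : ℝ) - (Y⁻¹ : ℝ)) • y'‖ ≤ ε / X := by
      rw [norm_smul, Real.norm_eq_abs, hny]
      have hYX : |Y - X| ≤ ε := by
        have := abs_norm_sub_norm_le y' x'
        rw [hnx, hny, norm_sub_rev] at this
        exact le_trans this hxy'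
      calc |X⁻¹ - Y⁻¹| * Y = |Y - X| / X := by
            rw [inv_sub_inv hXpos.ne' hYpos.ne', abs_div, abs_of_pos (mul_pos hXpos hYpos),
              div_mul_eq_mul_div, mul_comm X Y, ← div_div, mul_div_assoc,
              div_self hYpos.ne', mul_one]
        _ ≤ ε / X := by gcongr
    calc ‖u - v‖ ≤ ‖(X⁻¹ : ℝ) • (x' - y')‖ + ‖((X⁻¹ : ℝ) - (Y⁻¹ : ℝ)) • y'‖ := by
          rw [hdecomp]; exact norm_add_le _ _
      _ ≤ ε / X + ε / X := add_le_add h1 h2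
      _ = 2 * ε / X := by ring
  -- the sum bound
  set p : Fin n → ℝ := fun i => ‖x i‖ / X with hpdef
  set q : Fin n → ℝ := fun i => ‖y i‖ / Y with hqdef
  set r : Fin n → ℝ := fun i => ‖u i - v i‖ with hrdef
  have hui : ∀ i, ‖u i‖ = p i := by
    intro i
    show ‖(X⁻¹ : ℝ) • x i‖ = _
    rw [norm_smul, Real.norm_eq_abs, abs_of_pos (inv_pos.mpr hXpos), hpdef]
    simp [div_eq_inv_mul]
  have hvi : ∀ i, ‖v i‖ = q i := by
    intro i
    show ‖(Y⁻¹ : ℝ) • y i‖ = _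
    rw [norm_smul, Real.norm_eq_abs, abs_of_pos (inv_pos.mpr hYpos), hqdef]
    simp [div_eq_inv_mul]
  have hXsq : X ^ 2 = ∑ i, ‖x i‖ ^ 2 := enorm'_sq x
  have hYsq : Y ^ 2 = ∑ i, ‖y i‖ ^ 2 := enorm'_sq y
  have hsp : ∑ i, p i ^ 2 = 1 := by
    simp only [hpdef, div_pow, ← Finset.sum_div, ← hXsq]
    exact div_self (by positivity)
  have hsq : ∑ i, q i ^ 2 = 1 := by
    simp only [hqdef, div_pow, ← Finset.sum_div, ← hYsq]
    exact div_self (by positivity)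
  have hsr : ∑ i, r i ^ 2 = ‖u - v‖ ^ 2 := by
    rw [EuclideanSpace.norm_eq, Real.sq_sqrt (Finset.sum_nonneg fun i _ => sq_nonneg _)]
    refine Finset.sum_congr rfl fun i _ => ?_
    rw [hrdef]
    simp [PiLp.sub_apply]
  have hpnn : ∀ i, 0 ≤ p i := fun i => by rw [hpdef]; positivity
  have hqnn : ∀ i, 0 ≤ q i := fun i => by rw [hqdef]; positivity
  have hrnn : ∀ i, 0 ≤ r i := fun i => by rw [hrdef]; positivity
  have hsum : ∑ i, |‖x i‖ ^ 2 / X ^ 2 - ‖y i‖ ^ 2 / Y ^ 2| ≤ 2 * ‖u - v‖ := by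
    have step1 : ∀ i, |‖x i‖ ^ 2 / X ^ 2 - ‖y i‖ ^ 2 / Y ^ 2| ≤ (p i + q i) * r i := by
      intro i
      have h1 : ‖x i‖ ^ 2 / X ^ 2 = p i ^ 2 := by rw [hpdef, div_pow]
      have h2 : ‖y i‖ ^ 2 / Y ^ 2 = q i ^ 2 := by rw [hqdef, div_pow]
      rw [h1, h2]
      have hab : |p i ^ 2 - q i ^ 2| = (p i + q i) * |p i - q i| := by
        rw [sq_sub_sq, abs_mul, abs_of_nonneg (by have := hpnn i; have := hqnn i; linarith)]
      rw [hab]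
      apply mul_le_mul_of_nonneg_left _ (by have := hpnn i; have := hqnn i; linarith)
      calc |p i - q i| = |‖u i‖ - ‖v i‖| := by rw [hui, hvi]
        _ ≤ ‖u i - v i‖ := abs_norm_sub_norm_le _ _
        _ = r i := (hrdef ▸ rfl)
    have cs := Finset.sum_mul_sq_le_sq_mul_sq Finset.univ (fun i => p i + q i) r
    have h4 : ∑ i, (p i + q i) ^ 2 ≤ 4 := by
      calc ∑ i, (p i + q i) ^ 2 ≤ ∑ i, (2 * p i ^ 2 + 2 * q i ^ 2) := by
            apply Finset.sum_le_sum
            intro i _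
            nlinarith [sq_nonneg (p i - q i)]
        _ = 4 := by rw [Finset.sum_add_distrib, ← Finset.mul_sum, ← Finset.mul_sum, hsp, hsq]; norm_num
    have hS : (∑ i, (p i + q i) * r i) ^ 2 ≤ (2 * ‖u - v‖) ^ 2 := by
      calc (∑ i, (p i + q i) * r i) ^ 2 ≤ (∑ i, (p i + q i) ^ 2) * ∑ i, r i ^ 2 := cs
        _ ≤ 4 * ‖u - v‖ ^ 2 := by
            rw [hsr]
            exact mul_le_mul_of_nonneg_right h4 (by positivity)
        _ = (2 * ‖u - v‖) ^ 2 := by ring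
    have hSnn : 0 ≤ ∑ i, (p i + q i) * r i :=
      Finset.sum_nonneg fun i _ =>
        mul_nonneg (by have := hpnn i; have := hqnn i; linarith) (hrnn i)
    have hfin : ∑ i, (p i + q i) * r i ≤ 2 * ‖u - v‖ := by
      have h2uv : 0 ≤ 2 * ‖u - v‖ := by positivity
      nlinarith [hS, hSnn]
    calc ∑ i, |‖x i‖ ^ 2 / X ^ 2 - ‖y i‖ ^ 2 / Y ^ 2|
        ≤ ∑ i, (p i + q i) * r i := Finset.sum_le_sum (fun i _ => step1 i)
      _ ≤ 2 * ‖u - v‖ := hfin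
  calc (1 / 2) * ∑ i, |‖x i‖ ^ 2 / X ^ 2 - ‖y i‖ ^ 2 / Y ^ 2|
      ≤ (1 / 2) * (2 * ‖u - v‖) := by linarith
    _ = ‖u - v‖ := by ring
    _ ≤ 2 * ε / X := huv
end

section
/- Let X, Y ∈ C^{n×n} be Hermitian matrices and let Δ = X − Y have orthonormal eigenbasis v_1,…,v_n with eigenvalues λ_1,…,λ_n. Then ||X² − Y²||_F² ≥ ∑_{i=1}^n λ_i²·|v_i†(X + Y)v_i|². -/
open Matrix Finset
open scoped ComplexOrder

theorem stmt7 {n : ℕ} (X Y Δ : Matrix (Fin n) (Fin n) ℂ)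
    (hX : X.IsHermitian) (hY : Y.IsHermitian) (hΔ : Δ = X - Y)
    (lam : Fin n → ℝ) (v : Fin n → Fin n → ℂ)
    (hunit : ∀ i, star (v i) ⬝ᵥ v i = 1)
    (horth : ∀ i j, i ≠ j → star (v i) ⬝ᵥ v j = 0)
    (heig : ∀ i, Δ.mulVec (v i) = (lam i : ℂ) • v i) :
    ∑ i, (lam i) ^ 2 * ‖star (v i) ⬝ᵥ ((X + Y).mulVec (v i))‖ ^ 2
      ≤ (frob (X * X - Y * Y)) ^ 2 := by
  set M : Matrix (Fin n) (Fin n) ℂ := X * X - Y * Y with hMdef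
  have hΔherm : Δ.IsHermitian := by rw [hΔ]; exact hX.sub hY
  have hM2 : M = Y * Δ + Δ * X := by rw [hΔ, hMdef]; noncomm_ring
  -- left eigenvector property
  have hvec : ∀ i, Matrix.vecMul (star (v i)) Δ = (lam i : ℂ) • star (v i) := by
    intro i
    have h1 : star (Δ.mulVec (v i)) = Matrix.vecMul (star (v i)) Δᴴ := Matrix.star_mulVec Δ (v i)
    rw [hΔherm.eq] at h1
    rw [← h1, heig i, star_smul]
    simp [Complex.star_def]
  -- key diagonal identity
  have key : ∀ i, star (v i) ⬝ᵥ M.mulVec (v i)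
      = (lam i : ℂ) * (star (v i) ⬝ᵥ ((X + Y).mulVec (v i))) := by
    intro i
    have e1 : (Y * Δ).mulVec (v i) = (lam i : ℂ) • (Y.mulVec (v i)) := by
      rw [← Matrix.mulVec_mulVec, heig i, Matrix.mulVec_smul]
    have e2 : star (v i) ⬝ᵥ ((Δ * X).mulVec (v i))
        = (lam i : ℂ) * (star (v i) ⬝ᵥ (X.mulVec (v i))) := by
      rw [← Matrix.mulVec_mulVec, Matrix.dotProduct_mulVec, hvec i,
        smul_dotProduct, smul_eq_mul]
    rw [hM2, Matrix.add_mulVec, dotProduct_add, e1, dotProduct_smul, e2,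
      Matrix.add_mulVec, dotProduct_add, smul_eq_mul]
    ring
  -- the unitary matrix of eigenvectors
  set U : Matrix (Fin n) (Fin n) ℂ := Matrix.of (fun i j => v j i) with hUdef
  have hUU : Uᴴ * U = 1 := by
    ext i j
    simp only [Matrix.mul_apply, Matrix.conjTranspose_apply, hUdef, Matrix.of_apply,
      Matrix.one_apply]
    by_cases h : i = j
    · subst h; simpa [dotProduct] using hunit i
    · simpa [dotProduct, h] using horth i j h
  have hUUT : U * Uᴴ = 1 := mul_eq_one_comm.mp hUU
  set N : Matrix (Fin n) (Fin n) ℂ := Uᴴ * M * U with hNdef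
  -- diagonal of N
  have hdiag : ∀ i, N i i = star (v i) ⬝ᵥ M.mulVec (v i) := by
    intro i
    simp only [hNdef, Matrix.mul_apply, Matrix.conjTranspose_apply, hUdef, Matrix.of_apply,
      dotProduct, Matrix.mulVec, Finset.sum_mul, Finset.mul_sum, Pi.star_apply]
    rw [Finset.sum_comm]
    apply Finset.sum_congr rfl; intro k _
    apply Finset.sum_congr rfl; intro l _
    ring
  -- Frobenius invariance via traces
  have htr : ∀ A : Matrix (Fin n) (Fin n) ℂ,
      ∑ i, ∑ j, ‖A i j‖ ^ 2 = (Matrix.trace (Aᴴ * A)).re := by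
    intro A
    rw [Matrix.trace]
    simp only [Matrix.diag, Matrix.mul_apply, Matrix.conjTranspose_apply, Complex.re_sum]
    rw [Finset.sum_comm]
    apply Finset.sum_congr rfl; intro i _
    apply Finset.sum_congr rfl; intro j _
    rw [show star (A j i) = (starRingEnd ℂ) (A j i) from rfl,
      ← Complex.normSq_eq_conj_mul_self]
    simp [Complex.normSq_eq_norm_sq, ← Complex.ofReal_pow]
  have hfrob : ∑ i, ∑ j, ‖N i j‖ ^ 2 = ∑ i, ∑ j, ‖M i j‖ ^ 2 := by
    rw [htr N, htr M]
    congr 1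
    have : Nᴴ * N = Uᴴ * (Mᴴ * M) * U := by
      simp only [hNdef, Matrix.conjTranspose_mul, Matrix.conjTranspose_conjTranspose,
        Matrix.mul_assoc]
      rw [← Matrix.mul_assoc U Uᴴ, hUUT, Matrix.one_mul]
    rw [this, Matrix.trace_mul_cycle, ← Matrix.mul_assoc, hUUT, Matrix.one_mul]
  -- put it together
  have hstep : ∑ i, (lam i) ^ 2 * ‖star (v i) ⬝ᵥ ((X + Y).mulVec (v i))‖ ^ 2
      = ∑ i, ‖N i i‖ ^ 2 := by
    apply Finset.sum_congr rfl; intro i _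
    rw [hdiag i, key i]
    rw [norm_mul, mul_pow, Complex.norm_real, Real.norm_eq_abs, sq_abs]
  rw [hstep]
  have hle : ∑ i, ‖N i i‖ ^ 2 ≤ ∑ i, ∑ j, ‖N i j‖ ^ 2 := by
    apply Finset.sum_le_sum; intro i _
    exact Finset.single_le_sum (f := fun j => ‖N i j‖ ^ 2)
      (fun j _ => sq_nonneg _) (Finset.mem_univ i)
  refine hle.trans ?_
  rw [hfrob]
  have hnn : (0:ℝ) ≤ ∑ i, ∑ j, ‖M i j‖ ^ 2 :=
    Finset.sum_nonneg fun i _ => Finset.sum_nonneg fun j _ => sq_nonneg _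
  have hfr : frob M = Real.sqrt (∑ i, ∑ j, ‖M i j‖ ^ 2) := rfl
  rw [hfr, Real.sq_sqrt hnn]
end

section
/- Let X, Y ∈ C^{n×n} be Hermitian positive semidefinite, and let Π_X and Π_Y denote the orthogonal projectors onto the column spaces of X and Y respectively. Let σ_min be a lower bound on the nonzero singular values of X. Then ||Π_X(I − Π_Y)||_F ≤ ||X − Y||_F / σ_min. -/
open Matrix Finset
open scoped ComplexOrder

section aux
variable {n : ℕ}

noncomputable def fsq (M : Matrix (Fin n) (Fin n) ℂ) : ℝ := ∑ i, ∑ j, ‖M i j‖ ^ 2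

lemma fsq_nonneg (M : Matrix (Fin n) (Fin n) ℂ) : 0 ≤ fsq M := by
  apply Finset.sum_nonneg; intro i _; apply Finset.sum_nonneg; intro j _; positivity

lemma frob_eq_sqrt_fsq (M : Matrix (Fin n) (Fin n) ℂ) : frob M = Real.sqrt (fsq M) := rfl

lemma norm_sq_eq_re (z : ℂ) : ‖z‖ ^ 2 = (z * star z).re := by
  rw [Complex.star_def, Complex.mul_conj]
  simp [Complex.normSq_eq_norm_sq, ← Complex.ofReal_pow]

lemma fsq_eq_trace (M : Matrix (Fin n) (Fin n) ℂ) : fsq M = (trace (M * Mᴴ)).re := by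
  rw [fsq, trace, Complex.re_sum]
  refine Finset.sum_congr rfl fun i _ => ?_
  rw [diag_apply, mul_apply, Complex.re_sum]
  refine Finset.sum_congr rfl fun j _ => ?_
  rw [conjTranspose_apply, norm_sq_eq_re]

lemma fsq_unitary_left (U M : Matrix (Fin n) (Fin n) ℂ) (hU : Uᴴ * U = 1) :
    fsq (U * M) = fsq M := by
  rw [fsq_eq_trace, fsq_eq_trace]
  have h1 : (U * M) * (U * M)ᴴ = U * (M * Mᴴ) * Uᴴ := by
    rw [conjTranspose_mul, mul_assoc, mul_assoc, mul_assoc]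
  rw [h1, trace_mul_cycle, ← mul_assoc, hU, one_mul]

lemma fsq_proj_right (M P : Matrix (Fin n) (Fin n) ℂ) (hP : P * P = P) (hPh : Pᴴ = P) :
    fsq (M * (1 - P)) ≤ fsq M := by
  have h1P : (1 - P)ᴴ = 1 - P := by rw [conjTranspose_sub, conjTranspose_one, hPh]
  have h1Pi : (1 - P) * (1 - P) = 1 - P := by
    simp [Matrix.sub_mul, Matrix.mul_sub, hP]
  have key : (M * (1 - P)) * (M * (1 - P))ᴴ = M * Mᴴ - (M * P) * (M * P)ᴴ := by
    rw [conjTranspose_mul, h1P, mul_assoc, ← mul_assoc (1-P), h1Pi, conjTranspose_mul, hPh]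
    rw [Matrix.sub_mul, Matrix.mul_sub, one_mul, mul_assoc, ← mul_assoc P, hP, ← mul_assoc]
  rw [fsq_eq_trace, fsq_eq_trace M, key, trace_sub, Complex.sub_re]
  have := fsq_nonneg (M * P)
  rw [fsq_eq_trace] at this
  linarith

lemma fsq_diag_left (d : Fin n → ℂ) (M : Matrix (Fin n) (Fin n) ℂ) (c : ℝ)
    (hc : ∀ i, ‖d i‖ ≤ c) :
    fsq (diagonal d * M) ≤ c ^ 2 * fsq M := by
  simp only [fsq, Finset.mul_sum]
  apply Finset.sum_le_sum; intro i _
  apply Finset.sum_le_sum; intro j _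
  rw [diagonal_mul, norm_mul, mul_pow]
  have h0 : 0 ≤ c := le_trans (norm_nonneg _) (hc i)
  have := hc i
  have h2 : ‖d i‖ ^ 2 ≤ c ^ 2 := by nlinarith [norm_nonneg (d i)]
  nlinarith [sq_nonneg ‖M i j‖, norm_nonneg (M i j)]

lemma ext_mulVec {A B : Matrix (Fin n) (Fin n) ℂ} (h : ∀ v, A *ᵥ v = B *ᵥ v) : A = B := by
  ext i j
  have := congrFun (h (Pi.single j 1)) i
  simpa using this

lemma proj_unique (A B : Matrix (Fin n) (Fin n) ℂ) (hA : A * A = A) (hAh : Aᴴ = A)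
    (hB : B * B = B) (hBh : Bᴴ = B)
    (h : LinearMap.range A.mulVecLin = LinearMap.range B.mulVecLin) : A = B := by
  have key : ∀ (C D : Matrix (Fin n) (Fin n) ℂ), C * C = C →
      LinearMap.range D.mulVecLin ≤ LinearMap.range C.mulVecLin → C * D = D := by
    intro C D hC hle
    apply ext_mulVec
    intro v
    obtain ⟨w, hw⟩ := hle ⟨v, rfl⟩
    simp only [mulVecLin_apply] at hw
    rw [← mulVec_mulVec, ← hw, mulVec_mulVec, hC, hw]
  have h1 : A * B = B := key A B hA h.ge
  have h2 : B * A = A := key B A hB h.le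
  have h3 : A * B = A := by
    have := congrArg conjTranspose h2
    rwa [conjTranspose_mul, hAh, hBh] at this
  rw [← h1, h3]

end aux

theorem stmt9 {n : ℕ} (X Y PX PY : Matrix (Fin n) (Fin n) ℂ)
    (hX : X.PosSemidef) (hY : Y.PosSemidef)
    (hPX1 : PX * PX = PX) (hPX2 : PX.IsHermitian) (hPX3 : PX * X = X)
    (hPX4 : LinearMap.range PX.mulVecLin = LinearMap.range X.mulVecLin)
    (hPY1 : PY * PY = PY) (hPY2 : PY.IsHermitian) (hPY3 : PY * Y = Y)
    (hPY4 : LinearMap.range PY.mulVecLin = LinearMap.range Y.mulVecLin)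
    (σ : ℝ) (hσ : 0 < σ)
    (hσX : ∀ i, hX.1.eigenvalues i ≠ 0 → σ ≤ hX.1.eigenvalues i) :
    frob (PX * (1 - PY)) ≤ frob (X - Y) / σ := by
  classical
  set lam := hX.1.eigenvalues with hlam
  set U : Matrix (Fin n) (Fin n) ℂ := (hX.1.eigenvectorUnitary : Matrix (Fin n) (Fin n) ℂ)
    with hUdef
  have hU1 : Uᴴ * U = 1 := by
    rw [hUdef, ← star_eq_conjTranspose]
    exact mem_unitaryGroup_iff'.mp (hX.1.eigenvectorUnitary).2
  have hU2 : U * Uᴴ = 1 := by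
    rw [hUdef, ← star_eq_conjTranspose]
    exact mem_unitaryGroup_iff.mp (hX.1.eigenvectorUnitary).2
  set lamC : Fin n → ℂ := fun i => ((lam i : ℝ) : ℂ) with hlamC
  have hXform : X = U * diagonal lamC * Uᴴ := by
    rw [hUdef, ← star_eq_conjTranspose]
    exact hX.1.spectral_theorem
  set d : Fin n → ℂ := fun i => if lam i = 0 then 0 else (((lam i)⁻¹ : ℝ) : ℂ) with hd
  set e : Fin n → ℂ := fun i => if lam i = 0 then 0 else 1 with he
  set G : Matrix (Fin n) (Fin n) ℂ := U * diagonal d * Uᴴ with hG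
  set Q : Matrix (Fin n) (Fin n) ℂ := U * diagonal e * Uᴴ with hQ
  have hprod : ∀ a b : Fin n → ℂ, (U * diagonal a * Uᴴ) * (U * diagonal b * Uᴴ)
      = U * diagonal (fun i => a i * b i) * Uᴴ := by
    intro a b
    rw [mul_assoc (U * diagonal a),
      show Uᴴ * (U * diagonal b * Uᴴ) = diagonal b * Uᴴ by
        rw [← mul_assoc, ← mul_assoc, hU1, one_mul],
      ← mul_assoc, mul_assoc U, diagonal_mul_diagonal]
  have hde : (fun i => d i * lamC i) = e := by
    funext i
    by_cases h : lam i = 0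
    · simp [hd, he, hlamC, h]
    · simp only [hd, he, hlamC, if_neg h]
      rw [← Complex.ofReal_mul, inv_mul_cancel₀ h, Complex.ofReal_one]
  have hld : (fun i => lamC i * d i) = e := by
    funext i
    by_cases h : lam i = 0
    · simp [hd, he, hlamC, h]
    · simp only [hd, he, hlamC, if_neg h]
      rw [← Complex.ofReal_mul, mul_inv_cancel₀ h, Complex.ofReal_one]
  have hel : (fun i => e i * lamC i) = lamC := by
    funext i
    by_cases h : lam i = 0
    · simp [he, hlamC, h]
    · simp [he, if_neg h]
  have hee : (fun i => e i * e i) = e := by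
    funext i
    by_cases h : lam i = 0 <;> simp [he, h]
  have hestar : star e = e := by
    funext i
    by_cases h : lam i = 0 <;> simp [he, h]
  have hGX : G * X = Q := by rw [hG, hXform, hprod, hde, ← hQ]
  have hXG : X * G = Q := by rw [hG, hXform, hprod, hld, ← hQ]
  have hQX : Q * X = X := by rw [hQ, hXform, hprod, hel, ← hXform]
  have hQidem : Q * Q = Q := by rw [hQ, hprod, hee, ← hQ]
  have hQherm : Qᴴ = Q := by
    rw [hQ, conjTranspose_mul, conjTranspose_mul, conjTranspose_conjTranspose,
      diagonal_conjTranspose, hestar, ← mul_assoc]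
  have hrange : LinearMap.range Q.mulVecLin = LinearMap.range X.mulVecLin := by
    apply le_antisymm
    · conv_lhs => rw [← hXG]
      rw [mulVecLin_mul]
      exact LinearMap.range_comp_le_range _ _
    · conv_lhs => rw [← hQX]
      rw [mulVecLin_mul]
      exact LinearMap.range_comp_le_range _ _
  have hPXQ : PX = Q :=
    proj_unique PX Q hPX1 hPX2 hQidem hQherm (hPX4.trans hrange.symm)
  have hYPY : Y * PY = Y := by
    have := congrArg conjTranspose hPY3
    rwa [conjTranspose_mul, hPY2.eq, hY.1.eq] at this
  have hY0 : Y * (1 - PY) = 0 := by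
    rw [Matrix.mul_sub, mul_one, hYPY, sub_self]
  have hfactor : PX * (1 - PY) = G * ((X - Y) * (1 - PY)) := by
    rw [hPXQ, ← hGX, Matrix.sub_mul, hY0, sub_zero, mul_assoc]
  have hdbound : ∀ i, ‖d i‖ ≤ σ⁻¹ := by
    intro i
    by_cases h : lam i = 0
    · simp [hd, h, inv_nonneg.mpr hσ.le]
    · simp only [hd, if_neg h, Complex.norm_real]
      have h1 : σ ≤ lam i := hσX i h
      rw [Real.norm_eq_abs, abs_of_nonneg (inv_nonneg.mpr (hX.eigenvalues_nonneg i))]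
      exact inv_anti₀ hσ h1
  have hW : fsq ((X - Y) * (1 - PY)) ≤ fsq (X - Y) :=
    fsq_proj_right _ _ hPY1 hPY2.eq
  have key : fsq (PX * (1 - PY)) ≤ σ⁻¹ ^ 2 * fsq (X - Y) := by
    rw [hfactor]
    set W := (X - Y) * (1 - PY) with hWdef
    have h1 : G * W = U * (diagonal d * (Uᴴ * W)) := by
      rw [hG, mul_assoc, mul_assoc]
    rw [h1, fsq_unitary_left _ _ hU1]
    have hUH : (Uᴴ)ᴴ * Uᴴ = 1 := by rw [conjTranspose_conjTranspose]; exact hU2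
    calc fsq (diagonal d * (Uᴴ * W)) ≤ σ⁻¹ ^ 2 * fsq (Uᴴ * W) :=
          fsq_diag_left d _ σ⁻¹ hdbound
      _ = σ⁻¹ ^ 2 * fsq W := by rw [fsq_unitary_left _ _ hUH]
      _ ≤ σ⁻¹ ^ 2 * fsq (X - Y) := by
          apply mul_le_mul_of_nonneg_left hW (by positivity)
  rw [frob_eq_sqrt_fsq, frob_eq_sqrt_fsq]
  calc Real.sqrt (fsq (PX * (1 - PY))) ≤ Real.sqrt (σ⁻¹ ^ 2 * fsq (X - Y)) :=
        Real.sqrt_le_sqrt key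
    _ = σ⁻¹ * Real.sqrt (fsq (X - Y)) := by
        rw [Real.sqrt_mul (by positivity), Real.sqrt_sq (inv_nonneg.mpr hσ.le)]
    _ = Real.sqrt (fsq (X - Y)) / σ := by
        rw [div_eq_inv_mul]
end

section
/- Let M ∈ C^{m×n} and let i_1,…,i_p be independent row indices each sampled with probability P_i = ||M(i,·)||²/||M||_F². Let N ∈ C^{p×n} have rows N(t,·) = M(i_t,·)/√(p·P_{i_t}). Then E[N†N] = M†M, and for all θ > 0, Pr[||M†M − N†N||_F ≥ θ·||M||_F²] ≤ 1/(θ²p). -/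
open Matrix Finset
open scoped ComplexOrder

open scoped Classical

lemma sum_prod_pi {α : Type*} [Fintype α] [DecidableEq α] {m : ℕ} (Q : Fin m → ℂ) :
    ∑ f : α → Fin m, ∏ t, Q (f t) = ∏ _t : α, ∑ i, Q i := by
  rw [Finset.prod_univ_sum, Fintype.piFinset_univ]

lemma exp_one {α : Type*} [Fintype α] [DecidableEq α] {m : ℕ} (Q : Fin m → ℂ)
    (hQ : ∑ i, Q i = 1) (s : α) (h : Fin m → ℂ) :
    ∑ f : α → Fin m, (∏ t, Q (f t)) * h (f s) = ∑ i, Q i * h i := by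
  classical
  rw [← Equiv.sum_comp (Equiv.funSplitAt s (Fin m)).symm
        (fun f => (∏ t, Q (f t)) * h (f s))]
  rw [Fintype.sum_prod_type]
  have key : ∀ (a : Fin m) (g : {j // j ≠ s} → Fin m),
      (∏ t, Q ((Equiv.funSplitAt s (Fin m)).symm (a, g) t))
        = Q a * ∏ j : {j // j ≠ s}, Q (g j) := by
    intro a g
    rw [Fintype.prod_eq_mul_prod_compl s]
    congr 1
    · simp [Equiv.funSplitAt, Equiv.piSplitAt]
    · rw [Finset.prod_subtype ({s}ᶜ : Finset α) (p := fun j => j ≠ s) (fun x => by simp)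
        (fun j => Q ((Equiv.funSplitAt s (Fin m)).symm (a, g) j))]
      apply Finset.prod_congr rfl
      intro j _
      simp [Equiv.funSplitAt, Equiv.piSplitAt, j.2]
  have hval : ∀ (a : Fin m) (g : {j // j ≠ s} → Fin m),
      ((Equiv.funSplitAt s (Fin m)).symm (a, g)) s = a := by
    intro a g; simp [Equiv.funSplitAt, Equiv.piSplitAt]
  calc ∑ a : Fin m, ∑ g : {j // j ≠ s} → Fin m,
        (∏ t, Q ((Equiv.funSplitAt s (Fin m)).symm (a, g) t))
          * h ((Equiv.funSplitAt s (Fin m)).symm (a, g) s)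
      = ∑ a : Fin m, ∑ g : {j // j ≠ s} → Fin m,
        (Q a * h a) * ∏ j : {j // j ≠ s}, Q (g j) := by
        apply Finset.sum_congr rfl; intro a _
        apply Finset.sum_congr rfl; intro g _
        rw [key a g, hval a g]; ring
    _ = ∑ i, Q i * h i := by
        simp only [← Finset.sum_mul, ← Finset.mul_sum]
        rw [sum_prod_pi Q]
        simp [hQ]

lemma exp_two {α : Type*} [Fintype α] [DecidableEq α] {m : ℕ} (Q : Fin m → ℂ)
    (hQ : ∑ i, Q i = 1) (s t : α) (hst : s ≠ t) (h : Fin m → Fin m → ℂ) :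
    ∑ f : α → Fin m, (∏ r, Q (f r)) * h (f s) (f t) = ∑ i, ∑ i', Q i * Q i' * h i i' := by
  classical
  rw [← Equiv.sum_comp (Equiv.funSplitAt s (Fin m)).symm
        (fun f => (∏ r, Q (f r)) * h (f s) (f t))]
  rw [Fintype.sum_prod_type]
  have key : ∀ (a : Fin m) (g : {j // j ≠ s} → Fin m),
      (∏ r, Q ((Equiv.funSplitAt s (Fin m)).symm (a, g) r))
        = Q a * ∏ j : {j // j ≠ s}, Q (g j) := by
    intro a g
    rw [Fintype.prod_eq_mul_prod_compl s]
    congr 1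
    · simp [Equiv.funSplitAt, Equiv.piSplitAt]
    · rw [Finset.prod_subtype ({s}ᶜ : Finset α) (p := fun j => j ≠ s) (fun x => by simp)
        (fun j => Q ((Equiv.funSplitAt s (Fin m)).symm (a, g) j))]
      apply Finset.prod_congr rfl
      intro j _
      simp [Equiv.funSplitAt, Equiv.piSplitAt, j.2]
  have hvs : ∀ (a : Fin m) (g : {j // j ≠ s} → Fin m),
      ((Equiv.funSplitAt s (Fin m)).symm (a, g)) s = a := by
    intro a g; simp [Equiv.funSplitAt, Equiv.piSplitAt]
  have hvt : ∀ (a : Fin m) (g : {j // j ≠ s} → Fin m),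
      ((Equiv.funSplitAt s (Fin m)).symm (a, g)) t = g ⟨t, hst.symm⟩ := by
    intro a g; simp [Equiv.funSplitAt, Equiv.piSplitAt, hst.symm]
  calc ∑ a : Fin m, ∑ g : {j // j ≠ s} → Fin m,
        (∏ r, Q ((Equiv.funSplitAt s (Fin m)).symm (a, g) r))
          * h ((Equiv.funSplitAt s (Fin m)).symm (a, g) s)
              ((Equiv.funSplitAt s (Fin m)).symm (a, g) t)
      = ∑ a : Fin m, Q a * ∑ g : {j // j ≠ s} → Fin m,
          (∏ j : {j // j ≠ s}, Q (g j)) * h a (g ⟨t, hst.symm⟩) := by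
        apply Finset.sum_congr rfl; intro a _
        rw [Finset.mul_sum]
        apply Finset.sum_congr rfl; intro g _
        rw [key a g, hvs a g, hvt a g]; ring
    _ = ∑ i, ∑ i', Q i * Q i' * h i i' := by
        apply Finset.sum_congr rfl; intro a _
        have h1 := exp_one Q hQ (⟨t, hst.symm⟩ : {j // j ≠ s}) (fun i => h a i)
        rw [h1, Finset.mul_sum]
        apply Finset.sum_congr rfl; intro i' _
        ring

lemma conj_mul_self_eq (z : ℂ) : ((‖z‖ : ℝ) : ℂ) ^ 2 = (starRingEnd ℂ) z * z := by
  rw [← Complex.ofReal_pow, Complex.sq_norm, mul_comm, Complex.mul_conj]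

lemma swap4 {α β : Type*} [Fintype α] [Fintype β] (F : α → α → β → β → ℂ) :
    ∑ j : β, ∑ k : β, ∑ s : α, ∑ t : α, F s t j k
      = ∑ s : α, ∑ t : α, ∑ j : β, ∑ k : β, F s t j k :=
  calc ∑ j : β, ∑ k : β, ∑ s : α, ∑ t : α, F s t j k
      = ∑ j : β, ∑ s : α, ∑ k : β, ∑ t : α, F s t j k :=
        Finset.sum_congr rfl (fun _ _ => Finset.sum_comm)
    _ = ∑ s : α, ∑ j : β, ∑ k : β, ∑ t : α, F s t j k := Finset.sum_comm
    _ = ∑ s : α, ∑ j : β, ∑ t : α, ∑ k : β, F s t j k :=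
        Finset.sum_congr rfl (fun _ _ => Finset.sum_congr rfl (fun _ _ => Finset.sum_comm))
    _ = ∑ s : α, ∑ t : α, ∑ j : β, ∑ k : β, F s t j k :=
        Finset.sum_congr rfl (fun _ _ => Finset.sum_comm)

set_option maxHeartbeats 1600000 in
theorem stmt10 {m n p : ℕ} (hp : 0 < p) (M : Matrix (Fin m) (Fin n) ℂ)
    (hrow : ∀ i, ∃ j, M i j ≠ 0) (θ : ℝ) (hθ : 0 < θ) :
    let F2 : ℝ := ∑ i, ∑ j, ‖M i j‖ ^ 2
    let P : Fin m → ℝ := fun i => (∑ j, ‖M i j‖ ^ 2) / F2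
    let N : (Fin p → Fin m) → Matrix (Fin p) (Fin n) ℂ :=
      fun f t j => M (f t) j / ((Real.sqrt (p * P (f t)) : ℝ) : ℂ)
    (∑ f : Fin p → Fin m, (∏ t, P (f t)) • ((N f)ᴴ * N f) = Mᴴ * M) ∧
    (∑ f ∈ Finset.univ.filter
        (fun f : Fin p → Fin m => θ * F2 ≤ frob (Mᴴ * M - (N f)ᴴ * N f)),
        ∏ t, P (f t)) ≤ 1 / (θ ^ 2 * p) := by
  intro F2 P N
  rcases Nat.eq_zero_or_pos m with hm | hm
  · -- m = 0 : no rows, everything degenerates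
    subst hm
    haveI : Nonempty (Fin p) := ⟨⟨0, hp⟩⟩
    haveI : IsEmpty (Fin p → Fin 0) := ⟨fun f => (f ⟨0, hp⟩).elim0⟩
    rw [Finset.univ_eq_empty (α := Fin p → Fin 0)]
    constructor
    · rw [Finset.sum_empty]
      ext j k
      simp [Matrix.mul_apply]
    · rw [Finset.filter_empty, Finset.sum_empty]
      positivity
  · -- main case
    have hF2def : F2 = ∑ i, ∑ j, ‖M i j‖ ^ 2 := rfl
    have hPdef : ∀ i, P i = (∑ j, ‖M i j‖ ^ 2) / F2 := fun _ => rfl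
    have hrowpos : ∀ i, 0 < ∑ j, ‖M i j‖ ^ 2 := by
      intro i
      obtain ⟨j, hj⟩ := hrow i
      exact Finset.sum_pos' (fun j _ => by positivity)
        ⟨j, Finset.mem_univ j, pow_pos (norm_pos_iff.mpr hj) 2⟩
    have hF2 : 0 < F2 := by
      rw [hF2def]
      exact Finset.sum_pos (fun i _ => hrowpos i) ⟨⟨0, hm⟩, Finset.mem_univ _⟩
    have hP : ∀ i, 0 < P i := fun i => div_pos (hrowpos i) hF2
    have hPsum : ∑ i, P i = 1 := by
      simp only [hPdef]
      rw [← Finset.sum_div, ← hF2def, div_self hF2.ne']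
    set Q : Fin m → ℂ := fun i => ((P i : ℝ) : ℂ) with hQdef
    have hQ : ∑ i, Q i = 1 := by
      simp only [hQdef, ← Complex.ofReal_sum, hPsum, Complex.ofReal_one]
    have hQne : ∀ i, Q i ≠ 0 := by
      intro i
      simp only [hQdef, ne_eq, Complex.ofReal_eq_zero]
      exact (hP i).ne'
    have hpne : ((p : ℂ)) ≠ 0 := Nat.cast_ne_zero.mpr hp.ne'
    set a : Fin m → Fin n → Fin n → ℂ :=
      fun i j k => (starRingEnd ℂ) (M i j) * M i k with hadef
    have hNentry : ∀ (f : Fin p → Fin m) (t : Fin p) (j k : Fin n),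
        (starRingEnd ℂ) (N f t j) * N f t k = a (f t) j k / ((p : ℂ) * Q (f t)) := by
      intro f t j k
      have hc : ((Real.sqrt (p * P (f t)) : ℝ) : ℂ) * ((Real.sqrt (p * P (f t)) : ℝ) : ℂ)
          = (p : ℂ) * Q (f t) := by
        rw [← Complex.ofReal_mul, Real.mul_self_sqrt (by positivity)]
        push_cast
        try ring
      show (starRingEnd ℂ) (M (f t) j / _) * (M (f t) k / _) = _
      rw [map_div₀, Complex.conj_ofReal]
      rw [div_mul_div_comm, hc]
    have hNN : ∀ (f : Fin p → Fin m) (j k : Fin n),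
        ((N f)ᴴ * N f) j k = ∑ t, a (f t) j k / ((p : ℂ) * Q (f t)) := by
      intro f j k
      rw [Matrix.mul_apply]
      exact Finset.sum_congr rfl fun t _ => by
        rw [Matrix.conjTranspose_apply]
        exact hNentry f t j k
    have hMM : ∀ j k, (Mᴴ * M) j k = ∑ i, a i j k := by
      intro j k
      rw [Matrix.mul_apply]
      exact Finset.sum_congr rfl fun i _ => by rw [Matrix.conjTranspose_apply]; rfl
    -- Part 1
    have part1 : ∑ f : Fin p → Fin m, (∏ t, P (f t)) • ((N f)ᴴ * N f) = Mᴴ * M := by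
      ext j k
      rw [Matrix.sum_apply]
      have step1 : ∀ f : Fin p → Fin m,
          ((∏ t, P (f t)) • ((N f)ᴴ * N f)) j k
            = ∑ t, (∏ r, Q (f r)) * (a (f t) j k / ((p : ℂ) * Q (f t))) := by
        intro f
        rw [Matrix.smul_apply, hNN, Complex.real_smul, Complex.ofReal_prod, Finset.mul_sum]
      calc ∑ f : Fin p → Fin m, ((∏ t, P (f t)) • ((N f)ᴴ * N f)) j k
          = ∑ f : Fin p → Fin m, ∑ t, (∏ r, Q (f r)) * (a (f t) j k / ((p : ℂ) * Q (f t))) :=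
            Finset.sum_congr rfl fun f _ => step1 f
        _ = ∑ t : Fin p, ∑ f : Fin p → Fin m,
              (∏ r, Q (f r)) * (a (f t) j k / ((p : ℂ) * Q (f t))) := Finset.sum_comm
        _ = ∑ t : Fin p, ∑ i, Q i * (a i j k / ((p : ℂ) * Q i)) :=
            Finset.sum_congr rfl fun t _ =>
              exp_one Q hQ t (fun i => a i j k / ((p : ℂ) * Q i))
        _ = ∑ t : Fin p, (∑ i, a i j k) / (p : ℂ) := by
            apply Finset.sum_congr rfl; intro t _
            rw [Finset.sum_div]
            apply Finset.sum_congr rfl; intro i _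
            field_simp [hQne i]
        _ = (Mᴴ * M) j k := by
            rw [Finset.sum_const, Finset.card_univ, Fintype.card_fin, nsmul_eq_mul, hMM]
            field_simp
    refine ⟨part1, ?_⟩
    -- Part 2
    set D : (Fin p → Fin m) → Matrix (Fin n) (Fin n) ℂ :=
      fun f => Mᴴ * M - (N f)ᴴ * N f with hDdef
    set G : (Fin p → Fin m) → ℝ := fun f => ∑ j, ∑ k, ‖D f j k‖ ^ 2 with hGdef
    have hGnonneg : ∀ f, 0 ≤ G f := fun f =>
      Finset.sum_nonneg fun j _ => Finset.sum_nonneg fun k _ => by positivity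
    have hfrobG : ∀ f, frob (Mᴴ * M - (N f)ᴴ * N f) = Real.sqrt (G f) := fun f => rfl
    have hw : ∀ f : Fin p → Fin m, 0 ≤ ∏ t, P (f t) :=
      fun f => Finset.prod_nonneg fun t _ => (hP _).le
    have hconjQ : ∀ i, (starRingEnd ℂ) (Q i) = Q i := fun i => Complex.conj_ofReal _
    set X : Fin n → Fin n → ℂ := fun j k => (Mᴴ * M) j k with hXdef
    set C : Fin m → Fin n → Fin n → ℂ := fun i j k => X j k - a i j k / Q i with hCdef
    have hAsum : ∀ j k, ∑ i, Q i * (a i j k / Q i) = X j k := by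
      intro j k
      rw [hXdef]
      simp only [hMM]
      exact Finset.sum_congr rfl fun i _ => by
        rw [mul_comm, div_mul_cancel₀ _ (hQne i)]
    have hAsumc : ∀ j k, ∑ i, Q i * (starRingEnd ℂ) (a i j k / Q i)
        = (starRingEnd ℂ) (X j k) := by
      intro j k
      have h1 := congrArg (starRingEnd ℂ) (hAsum j k)
      rw [map_sum] at h1
      rw [← h1]
      exact Finset.sum_congr rfl fun i _ => by rw [_root_.map_mul, hconjQ]
    have hCsum : ∀ j k, ∑ i, Q i * C i j k = 0 := by
      intro j k
      simp only [hCdef, mul_sub]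
      rw [Finset.sum_sub_distrib, ← Finset.sum_mul, hQ, one_mul, hAsum, sub_self]
    have hCsumc : ∀ j k, ∑ i, Q i * (starRingEnd ℂ) (C i j k) = 0 := by
      intro j k
      have h1 := congrArg (starRingEnd ℂ) (hCsum j k)
      rw [map_sum, map_zero] at h1
      rw [← h1]
      exact Finset.sum_congr rfl fun i _ => by rw [_root_.map_mul, hconjQ]
    set Φ : Fin m → Fin m → ℂ :=
      fun i i' => ∑ j, ∑ k, (starRingEnd ℂ) (C i j k) * C i' j k with hΦdef
    set V : ℂ := ∑ i, Q i * Φ i i with hVdef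
    -- matrix difference entries
    have hD : ∀ f j k, D f j k = (∑ t, C (f t) j k) / (p : ℂ) := by
      intro f j k
      have l1 : D f j k = X j k - ∑ t, a (f t) j k / ((p : ℂ) * Q (f t)) := by
        rw [hDdef]
        simp only [Matrix.sub_apply, hNN]
        rfl
      have l2 : ∀ t : Fin p, C (f t) j k / (p : ℂ)
          = X j k / (p : ℂ) - a (f t) j k / ((p : ℂ) * Q (f t)) := by
        intro t
        simp only [hCdef]
        rw [sub_div, div_div, mul_comm (Q (f t)) ((p : ℂ))]
      rw [l1, Finset.sum_div]
      simp only [l2]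
      rw [Finset.sum_sub_distrib, Finset.sum_const, Finset.card_univ, Fintype.card_fin,
        nsmul_eq_mul, mul_comm ((p:ℕ):ℂ) (X j k / (p:ℂ)), div_mul_cancel₀ _ hpne]
    -- G as a complex double sum
    have hGC : ∀ f, ((G f : ℝ) : ℂ) = (∑ s, ∑ t, Φ (f s) (f t)) / ((p : ℂ) ^ 2) := by
      intro f
      have l1 : ((G f : ℝ) : ℂ) = ∑ j, ∑ k, (starRingEnd ℂ) (D f j k) * D f j k := by
        rw [hGdef]
        push_cast
        exact Finset.sum_congr rfl fun j _ => Finset.sum_congr rfl fun k _ =>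
          conj_mul_self_eq _
      have l2 : ∀ j k, (starRingEnd ℂ) (D f j k) * D f j k
          = (∑ s, ∑ t, (starRingEnd ℂ) (C (f s) j k) * C (f t) j k) / ((p : ℂ) ^ 2) := by
        intro j k
        rw [hD, map_div₀, map_sum, map_natCast, div_mul_div_comm, Finset.sum_mul_sum, sq]
      rw [l1]
      simp only [l2]
      simp only [← Finset.sum_div]
      congr 1
      have := swap4 (α := Fin p) (β := Fin n)
        (fun s t j k => (starRingEnd ℂ) (C (f s) j k) * C (f t) j k)
      rw [this]
    -- the expectation of each pair term
    have hInner : ∀ s t : Fin p,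
        (∑ f : Fin p → Fin m, (∏ r, Q (f r)) * Φ (f s) (f t)) = if s = t then V else 0 := by
      intro s t
      by_cases hst : s = t
      · subst hst
        rw [if_pos rfl, hVdef]
        exact exp_one Q hQ s (fun i => Φ i i)
      · rw [if_neg hst, exp_two Q hQ s t hst Φ]
        have l1 : ∀ i i', Q i * Q i' * Φ i i'
            = ∑ j, ∑ k, (Q i * (starRingEnd ℂ) (C i j k)) * (Q i' * C i' j k) := by
          intro i i'
          rw [hΦdef]
          simp only [Finset.mul_sum]
          exact Finset.sum_congr rfl fun j _ => Finset.sum_congr rfl fun k _ => by ring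
        simp only [l1]
        have := swap4 (α := Fin m) (β := Fin n)
          (fun i i' j k => (Q i * (starRingEnd ℂ) (C i j k)) * (Q i' * C i' j k))
        rw [← this]
        apply Finset.sum_eq_zero; intro j _
        apply Finset.sum_eq_zero; intro k _
        rw [← Finset.sum_mul_sum, hCsumc j k, zero_mul]
    -- expectation identity
    have hE : ∑ f : Fin p → Fin m, (∏ t, Q (f t)) * ((G f : ℝ) : ℂ) = V / (p : ℂ) := by
      have l1 : ∑ f : Fin p → Fin m, (∏ t, Q (f t)) * ((G f : ℝ) : ℂ)
          = (∑ s, ∑ t, ∑ f : Fin p → Fin m, (∏ r, Q (f r)) * Φ (f s) (f t)) / (p : ℂ) ^ 2 := by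
        simp only [hGC, ← mul_div_assoc]
        simp only [← Finset.sum_div]
        congr 1
        calc ∑ f : Fin p → Fin m, (∏ t, Q (f t)) * (∑ s, ∑ t, Φ (f s) (f t))
            = ∑ f : Fin p → Fin m, ∑ s, ∑ t, (∏ r, Q (f r)) * Φ (f s) (f t) := by
              apply Finset.sum_congr rfl; intro f _
              rw [Finset.mul_sum]
              exact Finset.sum_congr rfl fun sIdx _ => Finset.mul_sum _ _ _
          _ = ∑ s, ∑ f : Fin p → Fin m, ∑ t, (∏ r, Q (f r)) * Φ (f s) (f t) :=
              Finset.sum_comm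
          _ = ∑ s, ∑ t, ∑ f : Fin p → Fin m, (∏ r, Q (f r)) * Φ (f s) (f t) :=
              Finset.sum_congr rfl fun sIdx _ => Finset.sum_comm
      rw [l1]
      simp only [hInner]
      simp only [Finset.sum_ite_eq, Finset.mem_univ, if_true]
      rw [Finset.sum_const, Finset.card_univ, Fintype.card_fin, nsmul_eq_mul, sq,
        mul_div_mul_left _ _ hpne]
    -- value of V
    have hrowQ : ∀ i, ((∑ j, ‖M i j‖ ^ 2 : ℝ) : ℂ) = Q i * ((F2 : ℝ) : ℂ) := by
      intro i
      have l1 : (∑ j, ‖M i j‖ ^ 2) = P i * F2 := by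
        rw [hPdef, div_mul_cancel₀ _ hF2.ne']
      rw [l1, Complex.ofReal_mul]
    have haa : ∀ i j k, (starRingEnd ℂ) (a i j k) * a i j k
        = ((‖M i j‖ ^ 2 * ‖M i k‖ ^ 2 : ℝ) : ℂ) := by
      intro i j k
      rw [← conj_mul_self_eq (a i j k)]
      have l1 : ‖a i j k‖ = ‖M i j‖ * ‖M i k‖ := by
        rw [hadef]
        show ‖(starRingEnd ℂ) (M i j) * M i k‖ = _
        rw [norm_mul, RCLike.norm_conj]
      rw [l1]
      push_cast
      ring
    have hjk : ∀ j k, ∑ i, Q i * ((starRingEnd ℂ) (C i j k) * C i j k)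
        = (∑ i, (starRingEnd ℂ) (a i j k) * a i j k / Q i)
          - (starRingEnd ℂ) (X j k) * X j k := by
      intro j k
      have expand : ∀ i, Q i * ((starRingEnd ℂ) (C i j k) * C i j k)
          = ((starRingEnd ℂ) (a i j k) * a i j k / Q i)
            - (starRingEnd ℂ) (X j k) * a i j k
            - (starRingEnd ℂ) (a i j k) * X j k
            + Q i * ((starRingEnd ℂ) (X j k) * X j k) := by
        intro i
        simp only [hCdef, map_sub, map_div₀, hconjQ i]
        field_simp [hQne i]
        ring
      simp only [expand]
      rw [Finset.sum_add_distrib, Finset.sum_sub_distrib, Finset.sum_sub_distrib]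
      rw [← Finset.mul_sum, ← Finset.sum_mul, ← Finset.sum_mul, hQ, one_mul]
      have e1 : ∑ i, a i j k = X j k := (hMM j k).symm
      have e2 : ∑ i, (starRingEnd ℂ) (a i j k) = (starRingEnd ℂ) (X j k) := by
        rw [← map_sum, e1]
      rw [e1, e2]
      ring
    have hVval : V = ((F2 ^ 2 - ∑ j, ∑ k, ‖(Mᴴ * M) j k‖ ^ 2 : ℝ) : ℂ) := by
      have l1 : V = ∑ j, ∑ k, ∑ i, Q i * ((starRingEnd ℂ) (C i j k) * C i j k) := by
        rw [hVdef]
        simp only [hΦdef, Finset.mul_sum]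
        calc ∑ i, ∑ j, ∑ k, Q i * ((starRingEnd ℂ) (C i j k) * C i j k)
            = ∑ j, ∑ i, ∑ k, Q i * ((starRingEnd ℂ) (C i j k) * C i j k) :=
              Finset.sum_comm
          _ = ∑ j, ∑ k, ∑ i, Q i * ((starRingEnd ℂ) (C i j k) * C i j k) :=
              Finset.sum_congr rfl fun j _ => Finset.sum_comm
      rw [l1]
      simp only [hjk, Finset.sum_sub_distrib]
      have main1 : ∑ j, ∑ k, ∑ i, (starRingEnd ℂ) (a i j k) * a i j k / Q i
          = ((F2 ^ 2 : ℝ) : ℂ) := by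
        have sw : ∑ j, ∑ k, ∑ i, (starRingEnd ℂ) (a i j k) * a i j k / Q i
            = ∑ i, ∑ j, ∑ k, (starRingEnd ℂ) (a i j k) * a i j k / Q i := by
          calc ∑ j, ∑ k, ∑ i, (starRingEnd ℂ) (a i j k) * a i j k / Q i
              = ∑ j, ∑ i, ∑ k, (starRingEnd ℂ) (a i j k) * a i j k / Q i :=
                Finset.sum_congr rfl fun j _ => Finset.sum_comm
            _ = ∑ i, ∑ j, ∑ k, (starRingEnd ℂ) (a i j k) * a i j k / Q i :=
                Finset.sum_comm
        rw [sw]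
        have per : ∀ i, ∑ j, ∑ k, (starRingEnd ℂ) (a i j k) * a i j k / Q i
            = Q i * ((F2 : ℝ) : ℂ) ^ 2 := by
          intro i
          have c1 : ∑ j, ∑ k, (starRingEnd ℂ) (a i j k) * a i j k / Q i
              = (∑ j, ∑ k, (starRingEnd ℂ) (a i j k) * a i j k) / Q i := by
            rw [Finset.sum_div]
            exact Finset.sum_congr rfl fun j _ => by rw [Finset.sum_div]
          have c2 : ∑ j, ∑ k, (starRingEnd ℂ) (a i j k) * a i j k
              = (Q i * ((F2 : ℝ) : ℂ)) * (Q i * ((F2 : ℝ) : ℂ)) := by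
            simp only [haa]
            rw [← hrowQ i]
            push_cast
            rw [← Finset.sum_mul_sum]
          have c3 : (Q i * ((F2 : ℝ) : ℂ)) * (Q i * ((F2 : ℝ) : ℂ))
              = (Q i * ((F2 : ℝ) : ℂ) ^ 2) * Q i := by ring
          rw [c1, c2, c3, mul_div_cancel_right₀ _ (hQne i)]
        simp only [per]
        rw [← Finset.sum_mul, hQ, one_mul]
        push_cast
        ring
      have main2 : ∑ j, ∑ k, (starRingEnd ℂ) (X j k) * X j k
          = ((∑ j, ∑ k, ‖(Mᴴ * M) j k‖ ^ 2 : ℝ) : ℂ) := by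
        push_cast
        exact Finset.sum_congr rfl fun j _ => Finset.sum_congr rfl fun k _ =>
          (conj_mul_self_eq _).symm
      rw [main1, main2]
      push_cast
      ring
    -- expectation in real form and the bound
    have hcast : ((∑ f : Fin p → Fin m, (∏ t, P (f t)) * G f : ℝ) : ℂ)
        = ∑ f : Fin p → Fin m, (∏ t, Q (f t)) * ((G f : ℝ) : ℂ) := by
      simp only [hQdef]
      push_cast
      rfl
    have hreal : ∑ f : Fin p → Fin m, (∏ t, P (f t)) * G f
        = (F2 ^ 2 - ∑ j, ∑ k, ‖(Mᴴ * M) j k‖ ^ 2) / p := by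
      have h2 : ((∑ f : Fin p → Fin m, (∏ t, P (f t)) * G f : ℝ) : ℂ)
          = (((F2 ^ 2 - ∑ j, ∑ k, ‖(Mᴴ * M) j k‖ ^ 2) / p : ℝ) : ℂ) := by
        rw [hcast, hE, hVval]
        push_cast
        ring
      exact Complex.ofReal_injective h2
    have hKnn : (0:ℝ) ≤ ∑ j, ∑ k, ‖(Mᴴ * M) j k‖ ^ 2 :=
      Finset.sum_nonneg fun j _ => Finset.sum_nonneg fun k _ => sq_nonneg _
    have hppos : (0:ℝ) < p := Nat.cast_pos.mpr hp
    have hEG : ∑ f : Fin p → Fin m, (∏ t, P (f t)) * G f ≤ F2 ^ 2 / p := by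
      rw [hreal]
      exact (div_le_div_iff_of_pos_right hppos).mpr (sub_le_self _ hKnn)
    -- Markov / Chebyshev step
    have hθF : 0 < θ * F2 := mul_pos hθ hF2
    have hstep : ∀ f ∈ Finset.univ.filter
        (fun f : Fin p → Fin m => θ * F2 ≤ frob (Mᴴ * M - (N f)ᴴ * N f)),
        (θ * F2) ^ 2 ≤ G f := by
      intro f hf
      rw [Finset.mem_filter] at hf
      have h3 := hf.2
      rw [hfrobG] at h3
      exact (Real.le_sqrt hθF.le (hGnonneg f)).mp h3
    calc ∑ f ∈ Finset.univ.filter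
          (fun f : Fin p → Fin m => θ * F2 ≤ frob (Mᴴ * M - (N f)ᴴ * N f)),
          ∏ t, P (f t)
        ≤ ∑ f ∈ Finset.univ.filter
            (fun f : Fin p → Fin m => θ * F2 ≤ frob (Mᴴ * M - (N f)ᴴ * N f)),
            ((∏ t, P (f t)) * G f) / (θ * F2) ^ 2 := by
          apply Finset.sum_le_sum
          intro f hf
          rw [le_div_iff₀ (by positivity)]
          exact mul_le_mul_of_nonneg_left (hstep f hf) (hw f)
      _ ≤ ∑ f : Fin p → Fin m, ((∏ t, P (f t)) * G f) / (θ * F2) ^ 2 := by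
          apply Finset.sum_le_sum_of_subset_of_nonneg (Finset.filter_subset _ _)
          intro f _ _
          exact div_nonneg (mul_nonneg (hw f) (hGnonneg f)) (by positivity)
      _ = (∑ f : Fin p → Fin m, (∏ t, P (f t)) * G f) / (θ * F2) ^ 2 :=
          (Finset.sum_div _ _ _).symm
      _ ≤ (F2 ^ 2 / p) / (θ * F2) ^ 2 :=
          (div_le_div_iff_of_pos_right (by positivity)).mpr hEG
      _ = 1 / (θ ^ 2 * p) := by
          rw [mul_pow, div_div, div_eq_div_iff (by positivity) (by positivity)]
          ring
end
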